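/- Let d ≥ 1 be a natural number, let f : ℝ^d → ℂ be a continuous function, let δ > 0, and let a₀, a₁, …, a_n ∈ ℂ with a₀ ≠ 0. Assume that for every y ∈ ℝ^d with ‖y‖ ≤ δ and every x ∈ ℝ^d one has ∑_{k=0}^{n} a_k · f(x + k·y) = 0. Then f is an ordinary polynomial. -/

import Mathlib

open MeasureTheory Finset Metric
open scoped ContDiff

private lemma aux_vandermonde {n : ℕ} (a : Fin (n + 1) → ℂ) (ha : a 0 ≠ 0) :
    ∃ m : ℕ, (∑ k : Fin (n + 1), a k * ((k : ℕ) : ℂ) ^ m) ≠ 0 := by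
  by_contra h
  push_neg at h
  apply ha
  have hdet : (Matrix.vandermonde (fun k : Fin (n + 1) => ((k : ℕ) : ℂ))).det ≠ 0 := by
    rw [Matrix.det_vandermonde]
    apply Finset.prod_ne_zero_iff.2
    intro i _
    apply Finset.prod_ne_zero_iff.2
    intro j hj
    rw [Finset.mem_Ioi] at hj
    have hij : (i : ℕ) ≠ (j : ℕ) := fun hc => (ne_of_lt hj) (Fin.val_injective hc)
    have : ((i : ℕ) : ℂ) ≠ ((j : ℕ) : ℂ) := by exact_mod_cast hij
    exact sub_ne_zero.2 this.symm
  have hz : Matrix.vecMul a (Matrix.vandermonde (fun k : Fin (n + 1) => ((k : ℕ) : ℂ))) = 0 := by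
    funext m
    simpa [Matrix.vecMul, dotProduct, Matrix.vandermonde] using h m
  have := Matrix.eq_zero_of_vecMul_eq_zero hdet hz
  exact congrFun this 0

private lemma aux_taylor (m : ℕ) : ∀ (g : ℝ → ℂ), ContDiff ℝ ∞ g →
    (∀ t, iteratedDeriv m g t = 0) → ∀ t : ℝ,
    g t = ∑ j ∈ Finset.range m, ((t ^ j / (j.factorial : ℝ)) : ℝ) • iteratedDeriv j g 0 := by
  induction m with
  | zero =>
    intro g hg h t
    simpa [iteratedDeriv_zero] using h t
  | succ m IH =>
    intro g hg h t
    have hg' : ContDiff ℝ ∞ (deriv g) := (contDiff_infty_iff_deriv.mp hg).2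
    have hd : ∀ t, iteratedDeriv m (deriv g) t = 0 := by
      intro t
      rw [← iteratedDeriv_succ']
      exact h t
    have IH' := IH (deriv g) hg' hd
    set P : ℝ → ℂ := fun t => ∑ j ∈ Finset.range (m + 1),
      ((t ^ j / (j.factorial : ℝ)) : ℝ) • iteratedDeriv j g 0 with hP
    have hPderiv : ∀ t, HasDerivAt P (deriv g t) t := by
      intro t
      have h1 : HasDerivAt P (∑ j ∈ Finset.range (m + 1),
          (((j : ℝ) * t ^ (j - 1) / (j.factorial : ℝ)) : ℝ) • iteratedDeriv j g 0) t := by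
        apply HasDerivAt.fun_sum
        intro j hj
        have : HasDerivAt (fun t : ℝ => t ^ j / (j.factorial : ℝ))
            ((j : ℝ) * t ^ (j - 1) / (j.factorial : ℝ)) t :=
          (hasDerivAt_pow j t).div_const _
        exact this.smul_const _
      convert h1 using 1
      rw [IH' t]
      rw [Finset.sum_range_succ']
      simp only [Nat.cast_zero, zero_mul, zero_div, zero_smul, add_zero]
      apply Finset.sum_congr rfl
      intro j hj
      rw [iteratedDeriv_succ']
      congr 1
      field_simp [Nat.factorial_succ]
      simp only [Nat.add_sub_cancel, Nat.factorial_succ]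
      push_cast
      ring
    have hgd : ∀ s, HasDerivAt g (deriv g s) s :=
      fun s => (hg.differentiable (by simp)).differentiableAt.hasDerivAt
    have hconst : ∀ s, g s - P s = g 0 - P 0 := by
      intro s
      have : ∀ z, HasDerivAt (fun u => g u - P u) 0 z := by
        intro z
        have h0 := (hgd z).sub (hPderiv z)
        rw [sub_self] at h0
        exact h0
      have hdiff : Differentiable ℝ (fun u => g u - P u) := fun z => (this z).differentiableAt
      have := is_const_of_deriv_eq_zero hdiff (fun z => (this z).deriv) s 0
      exact this
    have hP0 : P 0 = g 0 := by
      have hz : ∀ j ∈ Finset.range (m+1), j ≠ 0 →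
          (((0:ℝ) ^ j / (j.factorial : ℝ)) : ℝ) • iteratedDeriv j g 0 = 0 := by
        intro j _ hj
        simp [zero_pow hj]
      simp only [hP]
      rw [Finset.sum_eq_single 0 hz (by simp)]
      simp [iteratedDeriv_zero]
    have h2 := hconst t
    rw [hP0, sub_self] at h2
    have h3 : g t = P t := by
      have := sub_eq_zero.mp h2
      exact this
    exact h3


private lemma aux_hcs_sum {α : Type*} [TopologicalSpace α] {ι : Type*} (s : Finset ι)
    (g : ι → α → ℂ) (h : ∀ i ∈ s, HasCompactSupport (g i)) :
    HasCompactSupport (fun u => ∑ i ∈ s, g i u) := by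
  induction s using Finset.cons_induction with
  | empty => simpa using
      (by simp [HasCompactSupport, tsupport] : HasCompactSupport (fun _ : α => (0:ℂ)))
  | cons a s ha ih =>
    simp only [Finset.sum_cons]
    exact (h a (Finset.mem_cons_self a s)).add (ih fun i hi => h i (Finset.mem_cons_of_mem hi))

private lemma aux_smooth (d n : ℕ)
    (f : EuclideanSpace ℝ (Fin d) → ℂ) (hf : Continuous f)
    (δ : ℝ) (hδ : 0 < δ) (a : Fin (n + 1) → ℂ) (ha : a 0 ≠ 0)
    (heq : ∀ y : EuclideanSpace ℝ (Fin d), ‖y‖ ≤ δ →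
      ∀ x : EuclideanSpace ℝ (Fin d),
        ∑ k : Fin (n + 1), a k * f (x + (k : ℕ) • y) = 0) :
    ContDiff ℝ ∞ f := by
  classical
  have hd0 : Module.finrank ℝ (EuclideanSpace ℝ (Fin d)) = d := finrank_euclideanSpace_fin
  set ι : ContDiffBump (0 : EuclideanSpace ℝ (Fin d)) :=
    ⟨δ/2, δ, by positivity, by linarith⟩ with hι
  set φ : EuclideanSpace ℝ (Fin d) → ℝ := ι.normed volume with hφ
  have hφc : Continuous φ := ι.continuous_normed
  have hφsupp : HasCompactSupport φ := ι.hasCompactSupport_normed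
  have hφint : ∫ y, φ y = 1 := ι.integral_normed
  have hφintC : ∫ y, ((φ y : ℝ) : ℂ) = 1 := by
    have h2 : (fun y => ((φ y : ℝ) : ℂ)) = fun y => (RCLike.ofReal (φ y) : ℂ) := rfl
    rw [h2, integral_ofReal, hφint]
    norm_cast
  have hφzero : ∀ y, ¬ ‖y‖ ≤ δ → φ y = 0 := by
    intro y hy
    have hy' : y ∉ Function.support φ := by
      rw [hφ, ι.support_normed_eq]
      intro hmem
      rw [Metric.mem_ball, dist_zero_right] at hmem
      exact hy (le_of_lt (by simpa [hι] using hmem))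
    simpa [Function.mem_support, not_not] using hy'
  have hψsupp : ∀ (c : ℝ), c ≠ 0 → ∀ x : EuclideanSpace ℝ (Fin d),
      HasCompactSupport (fun t => (φ (-(c⁻¹ • (x - t))) : ℂ)) := by
    intro c hc x
    have h1 : (fun t => (φ (-(c⁻¹ • (x - t))) : ℂ))
        = (Complex.ofReal ∘ φ) ∘ ⇑(((Homeomorph.subLeft x).trans
            (Homeomorph.smulOfNeZero (c⁻¹) (inv_ne_zero hc))).trans (Homeomorph.neg _)) := by
      funext t
      simp [Function.comp]
    rw [h1]
    exact (hφsupp.comp_left Complex.ofReal_zero).comp_homeomorph _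
  have hcont : ∀ (c : ℝ) (x : EuclideanSpace ℝ (Fin d)),
      Continuous (fun t => f t * (φ (-(c⁻¹ • (x - t))) : ℂ)) := by
    intro c x
    exact hf.mul (Complex.continuous_ofReal.comp
      (hφc.comp (by fun_prop : Continuous fun t => -(c⁻¹ • (x - t)))))
  have hintk : ∀ (x : EuclideanSpace ℝ (Fin d)) (c : ℝ),
      Integrable (fun y => f (x + c • y) * (φ y : ℂ)) volume := by
    intro x c
    apply Continuous.integrable_of_hasCompactSupport
    · exact (hf.comp (continuous_const.add (continuous_id.const_smul c))).mul
        (Complex.continuous_ofReal.comp hφc)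
    · exact (hφsupp.comp_left Complex.ofReal_zero).mul_left
  -- Step 1
  have step1 : ∀ x, a 0 * f x
      = - ∑ i : Fin n, a i.succ *
          ∫ y, f (x + (((i.succ : Fin (n+1)) : ℕ) : ℝ) • y) * (φ y : ℂ) := by
    intro x
    have hzero : (fun y => (∑ k : Fin (n+1), a k * f (x + (((k : ℕ)) : ℝ) • y)) * (φ y : ℂ))
        = fun _ => (0 : ℂ) := by
      funext y
      by_cases hy : ‖y‖ ≤ δ
      · have hrw : (∑ k : Fin (n+1), a k * f (x + (((k : ℕ)) : ℝ) • y))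
            = ∑ k : Fin (n+1), a k * f (x + (k : ℕ) • y) :=
          Finset.sum_congr rfl (fun k _ => by rw [Nat.cast_smul_eq_nsmul])
        rw [hrw, heq y hy x, zero_mul]
      · rw [hφzero y hy, Complex.ofReal_zero, mul_zero]
    have h0 : ∫ y, (∑ k : Fin (n+1), a k * f (x + (((k : ℕ)) : ℝ) • y)) * (φ y : ℂ) = 0 := by
      rw [hzero, integral_zero]
    have h1 : ∫ y, (∑ k : Fin (n+1), a k * f (x + (((k:ℕ)):ℝ) • y)) * (φ y:ℂ)
        = ∑ k : Fin (n+1), a k * ∫ y, f (x + (((k:ℕ)):ℝ) • y) * (φ y:ℂ) := by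
      rw [show (fun y => (∑ k : Fin (n+1), a k * f (x + (((k:ℕ)):ℝ) • y)) * (φ y:ℂ))
          = fun y => ∑ k : Fin (n+1), a k * (f (x + (((k:ℕ)):ℝ) • y) * (φ y:ℂ)) from by
        funext y
        rw [Finset.sum_mul]
        exact Finset.sum_congr rfl (fun k _ => by ring)]
      rw [integral_finset_sum _ (fun k _ => (hintk x _).const_mul (a k))]
      exact Finset.sum_congr rfl (fun k _ => integral_const_mul _ _)
    rw [h1, Fin.sum_univ_succ] at h0
    simp only [Fin.val_zero, Nat.cast_zero, zero_smul, add_zero] at h0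
    rw [integral_const_mul, hφintC, mul_one] at h0
    exact eq_neg_of_add_eq_zero_left h0
  -- Step 2 : change of variables
  have step2 : ∀ (c : ℝ), 0 < c → ∀ x : EuclideanSpace ℝ (Fin d),
      ∫ y, f (x + c • y) * (φ y : ℂ)
        = ((((c ^ d)⁻¹ : ℝ)) : ℂ) * ∫ t, f t * (φ (-(c⁻¹ • (x - t))) : ℂ) := by
    intro c hc x
    have hcne : c ≠ 0 := ne_of_gt hc
    have h1 : (fun y => f (x + c • y) * (φ y : ℂ))
        = fun y => (fun z => f (x + z) * (φ (c⁻¹ • z) : ℂ)) (c • y) := by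
      funext y
      simp [smul_smul, inv_mul_cancel₀ hcne]
    rw [h1, Measure.integral_comp_smul volume (fun z => f (x + z) * (φ (c⁻¹ • z) : ℂ)) c,
      hd0, abs_of_nonneg (by positivity : (0:ℝ) ≤ (c ^ d)⁻¹)]
    rw [← Complex.real_smul]
    congr 1
    have h2 := MeasureTheory.integral_add_left_eq_self (μ := volume)
      (fun t => f t * (φ (-(c⁻¹ • (x - t))) : ℂ)) x
    rw [← h2]
    congr 1
    funext z
    have h3 : -(c⁻¹ • (x - (x + z))) = c⁻¹ • z := by
      rw [sub_add_cancel_left, smul_neg, neg_neg]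
    rw [h3]
  -- the kernel
  set k : Fin n → ℝ := fun i => (((i.succ : Fin (n+1)) : ℕ) : ℝ) with hk
  have hkpos : ∀ i, 0 < k i := by
    intro i
    rw [hk]
    simp only [Fin.val_succ]
    positivity
  set G : EuclideanSpace ℝ (Fin d) → ℂ := fun u => ∑ i : Fin n,
      (-(a 0)⁻¹ * a i.succ * (((k i ^ d)⁻¹ : ℝ) : ℂ)) * (φ (-((k i)⁻¹ • u)) : ℂ) with hG
  have key : ∀ x, f x = convolution f G (ContinuousLinearMap.mul ℝ ℂ) volume x := by
    intro x
    rw [convolution_def]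
    simp only [ContinuousLinearMap.mul_apply']
    have hsplit : (fun t => f t * G (x - t))
        = fun t => ∑ i : Fin n, (-(a 0)⁻¹ * a i.succ * (((k i ^ d)⁻¹ : ℝ) : ℂ)) *
            (f t * (φ (-((k i)⁻¹ • (x - t))) : ℂ)) := by
      funext t
      rw [hG, Finset.mul_sum]
      exact Finset.sum_congr rfl (fun i _ => by ring)
    rw [hsplit, integral_finset_sum _ (fun i _ => (Continuous.integrable_of_hasCompactSupport
      (hcont (k i) x) ((hψsupp (k i) (hkpos i).ne' x).mul_left)).const_mul _)]
    have hpull : ∀ i : Fin n,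
        ∫ t, (-(a 0)⁻¹ * a i.succ * (((k i ^ d)⁻¹ : ℝ) : ℂ)) *
            (f t * (φ (-((k i)⁻¹ • (x - t))) : ℂ))
          = (-(a 0)⁻¹ * a i.succ * (((k i ^ d)⁻¹ : ℝ) : ℂ)) *
            ∫ t, f t * (φ (-((k i)⁻¹ • (x - t))) : ℂ) :=
      fun i => integral_const_mul _ _
    rw [Finset.sum_congr rfl (fun i _ => hpull i)]
    have hfx : f x = (a 0)⁻¹ * (a 0 * f x) := by
      field_simp
    rw [hfx, step1 x]
    rw [Finset.sum_congr rfl (fun i _ => by rw [step2 (k i) (hkpos i) x])]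
    rw [mul_neg, Finset.mul_sum, ← Finset.sum_neg_distrib]
    exact Finset.sum_congr rfl (fun i _ => by ring)
  -- compact support of G
  have hψsupp0 : ∀ (c : ℝ), c ≠ 0 →
      HasCompactSupport (fun u : EuclideanSpace ℝ (Fin d) => (φ (-(c⁻¹ • u)) : ℂ)) := by
    intro c hc
    have h1 : (fun u : EuclideanSpace ℝ (Fin d) => (φ (-(c⁻¹ • u)) : ℂ))
        = (Complex.ofReal ∘ φ) ∘ ⇑((Homeomorph.smulOfNeZero (c⁻¹) (inv_ne_zero hc)).trans
            (Homeomorph.neg _)) := by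
      funext u
      simp [Function.comp]
    rw [h1]
    exact (hφsupp.comp_left Complex.ofReal_zero).comp_homeomorph _
  have hGsupp : HasCompactSupport G := by
    rw [hG]
    exact aux_hcs_sum Finset.univ _ (fun i _ => (hψsupp0 (k i) (hkpos i).ne').mul_left)
  have hGsmooth : ContDiff ℝ ∞ G := by
    rw [hG]
    apply ContDiff.sum
    intro i _
    apply ContDiff.mul contDiff_const
    exact Complex.ofRealCLM.contDiff.comp
      ((ι.contDiff_normed).comp ((contDiff_id.const_smul ((k i)⁻¹)).neg))
  have hconv : ContDiff ℝ ∞ (convolution f G (ContinuousLinearMap.mul ℝ ℂ) volume) :=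
    hGsupp.contDiff_convolution_right (ContinuousLinearMap.mul ℝ ℂ)
      (hf.locallyIntegrable) hGsmooth (n := ⊤)
  have hfeq : f = convolution f G (ContinuousLinearMap.mul ℝ ℂ) volume := funext key
  rw [hfeq]
  exact hconv

/-- If a continuous `f : ℝ^d → ℂ` satisfies `∑_{k=0}^n a_k f(x + k y) = 0` for all
`x` and all `y` with `‖y‖ ≤ δ`, where `a 0 ≠ 0`, then `f` is an ordinary polynomial. -/
theorem polynomial_of_local_exponential_equation
    (d : ℕ) (hd : 1 ≤ d)
    (f : EuclideanSpace ℝ (Fin d) → ℂ) (hf : Continuous f)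
    (δ : ℝ) (hδ : 0 < δ)
    (n : ℕ) (a : Fin (n + 1) → ℂ) (ha : a 0 ≠ 0)
    (heq : ∀ y : EuclideanSpace ℝ (Fin d), ‖y‖ ≤ δ →
      ∀ x : EuclideanSpace ℝ (Fin d),
        ∑ k : Fin (n + 1), a k * f (x + (k : ℕ) • y) = 0) :
    ∃ p : MvPolynomial (Fin d) ℂ,
      ∀ x : EuclideanSpace ℝ (Fin d),
        f x = MvPolynomial.eval (fun i => (x i : ℂ)) p := by
  have hsm : ContDiff ℝ ∞ f := aux_smooth d n f hf δ hδ a ha heq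
  obtain ⟨m, hm⟩ := aux_vandermonde a ha
  classical
  have hline : ∀ (x v : EuclideanSpace ℝ (Fin d)), ContDiff ℝ ∞ (fun t : ℝ => f (x + t • v)) := by
    intro x v
    exact hsm.comp ((contDiff_const.add (contDiff_id.smul contDiff_const)))
  have hC : ∀ (x v : EuclideanSpace ℝ (Fin d)),
      iteratedDeriv m (fun t : ℝ => f (x + t • v)) 0 = 0 := by
    intro x v
    set g : ℝ → ℂ := fun t => f (x + t • v) with hgdef
    have hg : ContDiff ℝ ∞ g := hline x v
    set H : ℝ → ℂ := fun t => ∑ k : Fin (n + 1), a k * g (((k : ℕ) : ℝ) * t) with hHdef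
    have hε : (0:ℝ) < δ / (‖v‖ + 1) := by positivity
    have hH0 : H =ᶠ[nhds (0:ℝ)] (fun _ => 0) := by
      filter_upwards [Metric.ball_mem_nhds (0:ℝ) hε] with t ht
      have ht' : |t| < δ / (‖v‖ + 1) := by simpa [Real.dist_eq] using ht
      have hy : ‖t • v‖ ≤ δ := by
        rw [norm_smul, Real.norm_eq_abs]
        calc |t| * ‖v‖ ≤ (δ / (‖v‖ + 1)) * ‖v‖ := by
              apply mul_le_mul_of_nonneg_right (le_of_lt ht') (norm_nonneg v)
          _ ≤ δ := by
              rw [div_mul_eq_mul_div, div_le_iff₀ (by positivity)]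
              nlinarith [norm_nonneg v, hδ.le]
      have := heq (t • v) hy x
      have hrw : ∀ k : Fin (n + 1), x + (k : ℕ) • (t • v) = x + (((k : ℕ) : ℝ) * t) • v := by
        intro k
        congr 1
        rw [← Nat.cast_smul_eq_nsmul ℝ, smul_smul]
      simp only [hHdef, hgdef]
      calc ∑ k : Fin (n+1), a k * f (x + (((k : ℕ) : ℝ) * t) • v)
          = ∑ k : Fin (n+1), a k * f (x + (k : ℕ) • (t • v)) := by
            apply Finset.sum_congr rfl; intro k _; rw [hrw k]
        _ = 0 := this
    have hHm : iteratedDeriv m H 0 = 0 := by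
      rw [hH0.iteratedDeriv_eq]
      have hz : deriv (fun _ : ℝ => (0:ℂ)) = fun _ => (0:ℂ) := by
        funext z; simp
      rw [iteratedDeriv_eq_iterate, Function.iterate_fixed hz]
    have hterm : ∀ k : Fin (n + 1),
        iteratedDeriv m (fun t => g (((k : ℕ) : ℝ) * t)) 0
          = (((k : ℕ) : ℝ)) ^ m • iteratedDeriv m g 0 := by
      intro k
      have := iteratedDeriv_comp_const_smul (n := m) (f := g)
        (hg.of_le (by exact_mod_cast le_top)) (((k : ℕ) : ℝ))
      rw [congrFun this 0, mul_zero]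
    have hsum : iteratedDeriv m H 0
        = ∑ k : Fin (n + 1), a k • iteratedDeriv m (fun t => g (((k : ℕ) : ℝ) * t)) 0 := by
      have hck : ∀ k : Fin (n+1), ContDiff ℝ m (fun t => a k • g (((k : ℕ) : ℝ) * t)) := by
        intro k
        exact ((hg.of_le (by exact_mod_cast le_top)).comp
          (contDiff_const.mul contDiff_id)).const_smul _
      have hHrw : H = (∑ k : Fin (n+1), (fun t : ℝ => a k • g (((k : ℕ) : ℝ) * t)) ·) := by
        funext t
        simp [hHdef, smul_eq_mul]
      rw [iteratedDeriv_eq_iteratedFDeriv, hHrw, iteratedFDeriv_sum (fun k _ => hck k)]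
      simp only [Finset.sum_apply]
      rw [ContinuousMultilinearMap.sum_apply]
      apply Finset.sum_congr rfl
      intro k _
      have : iteratedFDeriv ℝ m (fun t : ℝ => a k • g (((k : ℕ) : ℝ) * t)) 0
          = a k • iteratedFDeriv ℝ m (fun t : ℝ => g (((k : ℕ) : ℝ) * t)) 0 :=
        iteratedFDeriv_const_smul_apply' (((hg.of_le (by exact_mod_cast le_top)).comp
          (contDiff_const.mul contDiff_id)).contDiffAt)
      rw [this, ContinuousMultilinearMap.smul_apply, iteratedDeriv_eq_iteratedFDeriv]
    rw [hsum] at hHm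
    have hfinal : (∑ k : Fin (n + 1), a k * ((k : ℕ) : ℂ) ^ m) * iteratedDeriv m g 0 = 0 := by
      rw [← hHm, Finset.sum_mul]
      apply Finset.sum_congr rfl
      intro k _
      rw [hterm k, smul_eq_mul]
      rw [Complex.real_smul]
      push_cast
      ring
    rcases mul_eq_zero.mp hfinal with h | h
    · exact absurd h hm
    · exact h
  have hC' : ∀ (v : EuclideanSpace ℝ (Fin d)) (s : ℝ),
      iteratedDeriv m (fun t : ℝ => f (t • v)) s = 0 := by
    intro v s
    have h1 : iteratedDeriv m (fun z : ℝ => f ((s + z) • v)) 0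
        = iteratedDeriv m (fun t : ℝ => f (t • v)) (s + 0) :=
      congrFun (iteratedDeriv_comp_const_add m (fun t : ℝ => f (t • v)) s) 0
    rw [add_zero] at h1
    rw [← h1]
    have h2 : (fun z : ℝ => f ((s + z) • v)) = fun z : ℝ => f (s • v + z • v) := by
      funext z; rw [add_smul]
    rw [h2]
    exact hC (s • v) v
  have hcoef : ∀ (j : ℕ) (v : EuclideanSpace ℝ (Fin d)),
      iteratedDeriv j (fun t : ℝ => f (t • v)) 0 = (iteratedFDeriv ℝ j f 0) (fun _ => v) := by
    intro j v
    set L : ℝ →L[ℝ] EuclideanSpace ℝ (Fin d) := ContinuousLinearMap.toSpanSingleton ℝ v with hL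
    have hfc : (fun t : ℝ => f (t • v)) = f ∘ L := by
      funext t; simp [hL, ContinuousLinearMap.toSpanSingleton_apply]
    rw [hfc, iteratedDeriv_eq_iteratedFDeriv,
      L.iteratedFDeriv_comp_right hsm 0 (by exact_mod_cast le_top)]
    rw [ContinuousMultilinearMap.compContinuousLinearMap_apply]
    simp [hL, ContinuousLinearMap.toSpanSingleton_apply]
  have hT : ∀ x₀ : EuclideanSpace ℝ (Fin d),
      f x₀ = ∑ j ∈ Finset.range m, (((1:ℝ) ^ j / (j.factorial : ℝ)) : ℝ) •
        (iteratedFDeriv ℝ j f 0) (fun _ => x₀) := by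
    intro x₀
    have hg : ContDiff ℝ ∞ (fun t : ℝ => f (t • x₀)) := by
      have := hline 0 x₀
      simpa using this
    have h1 := aux_taylor m (fun t : ℝ => f (t • x₀)) hg (hC' x₀) 1
    simp only [one_smul] at h1
    rw [h1]
    apply Finset.sum_congr rfl
    intro j _
    rw [hcoef j x₀]
  -- build polynomial
  classical
  set e : Fin d → EuclideanSpace ℝ (Fin d) := fun i => EuclideanSpace.single i (1:ℝ) with he
  have hxe : ∀ x : EuclideanSpace ℝ (Fin d), x = ∑ i : Fin d, x i • e i := by
    intro x
    ext i
    rw [WithLp.ofLp_sum, Finset.sum_apply]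
    simp [he, EuclideanSpace.single_apply]
  refine ⟨∑ j ∈ Finset.range m, ∑ r : Fin j → Fin d,
      MvPolynomial.C (((j.factorial : ℂ))⁻¹ * (iteratedFDeriv ℝ j f 0 (fun i => e (r i)))) *
        ∏ i : Fin j, MvPolynomial.X (r i), ?_⟩
  intro x
  rw [hT x, map_sum]
  apply Finset.sum_congr rfl
  intro j _
  rw [map_sum]
  have hexp : (iteratedFDeriv ℝ j f 0) (fun _ => x)
      = ∑ r : Fin j → Fin d, (∏ i : Fin j, x (r i)) •
          (iteratedFDeriv ℝ j f 0) (fun i => e (r i)) := by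
    have h1 : (fun _ : Fin j => x) = fun _ : Fin j => ∑ i' : Fin d, x i' • e i' := by
      funext _
      exact hxe x
    rw [h1]
    have h2 := (iteratedFDeriv ℝ j f 0).toMultilinearMap.map_sum
      (fun (_ : Fin j) (i' : Fin d) => x i' • e i')
    simp only [ContinuousMultilinearMap.coe_coe] at h2
    rw [h2]
    apply Finset.sum_congr rfl
    intro r _
    exact (iteratedFDeriv ℝ j f 0).map_smul_univ (fun i => x (r i)) (fun i => e (r i))
  rw [hexp, Finset.smul_sum]
  apply Finset.sum_congr rfl
  intro r _
  rw [MvPolynomial.eval_mul, MvPolynomial.eval_C, map_prod]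
  simp only [MvPolynomial.eval_X]
  rw [smul_smul, Complex.real_smul]
  push_cast
  ring
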